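/- Let G be a finite simple connected graph containing a W_a-configuration or a W_{a,b}-configuration H with centre v and connectors x and y, and let G' = G − (V(H) \ {x, y}). If G' has a G'-good spanning tree, then G has a G-good spanning tree. -/

import Mathlib

open SimpleGraph

/-- The degree of a vertex `v` in a simple graph `H`. -/
noncomputable def gdeg {V : Type} (H : SimpleGraph V) (v : V) : ℕ :=
  Nat.card (H.neighborSet v)

/-- The vertex set of a `W_a`-configuration with path `p`, centre `v` and connectors `x, y`. -/
def waVerts {V : Type} {n : ℕ} (p : Fin (n + 1) → V) (v x y : V) : Set V :=
  {v, x, y} ∪ Set.range p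

/-- The vertex set of a `W_{a,b}`-configuration with paths `p, q`, centre `v` and
connectors `x, y`. -/
def wabVerts {V : Type} {n m : ℕ} (p : Fin (n + 1) → V) (q : Fin (m + 1) → V)
    (v x y : V) : Set V :=
  {v, x, y} ∪ Set.range p ∪ Set.range q

/-- A `W_a`-configuration in `G` (here the path `p` has `n + 1` vertices, so `a = n + 1`):
an induced subgraph consisting of a path `p 0, …, p n` and three further distinct vertices
`v, x, y` not on the path, such that `v` is adjacent to all vertices of the path and to `x`
and `y`, with edges `x–p 0` and `y–p n`; every vertex of the configuration other than `v`
has degree 3 in `G`; `G` minus the vertices of the configuration is connected; both `x` and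
`y` have precisely one neighbour outside the configuration, and no other vertex of the
configuration has a neighbour outside it. `v` is the centre, `x, y` are the connectors. -/
def IsWaConfig {V : Type} [Fintype V] (G : SimpleGraph V) (n : ℕ)
    (p : Fin (n + 1) → V) (v x y : V) : Prop :=
  Function.Injective p ∧
  v ∉ Set.range p ∧ x ∉ Set.range p ∧ y ∉ Set.range p ∧
  v ≠ x ∧ v ≠ y ∧ x ≠ y ∧
  (∀ i : Fin n, G.Adj (p i.castSucc) (p i.succ)) ∧
  (∀ i, G.Adj v (p i)) ∧ G.Adj v x ∧ G.Adj v y ∧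
  G.Adj x (p 0) ∧ G.Adj y (p (Fin.last n)) ∧
  (∀ z ∈ waVerts p v x y, z ≠ v → gdeg G z = 3) ∧
  (G.induce (waVerts p v x y)ᶜ).Connected ∧
  (∃! w, w ∉ waVerts p v x y ∧ G.Adj x w) ∧
  (∃! w, w ∉ waVerts p v x y ∧ G.Adj y w) ∧
  (∀ z ∈ waVerts p v x y, z ≠ x → z ≠ y →
    ∀ w, w ∉ waVerts p v x y → ¬G.Adj z w)

/-- A `W_{a,b}`-configuration in `G` (the paths `p` and `q` have `n + 1` and `m + 1`
vertices respectively, so `a = n + 1`, `b = m + 1`): an induced subgraph consisting of two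
disjoint paths `p 0, …, p n` and `q 0, …, q m` and three further distinct vertices
`v, x, y` not on the paths, such that `v` is adjacent to all vertices of both paths, with
edges `x–p 0`, `x–q 0`, `y–p n` and `y–q m`; every vertex of the configuration other than
`v` has degree 3 in `G`; `G` minus the vertices of the configuration is connected; both `x`
and `y` have precisely one neighbour outside the configuration, and no other vertex of the
configuration has a neighbour outside it. `v` is the centre, `x, y` are the connectors. -/
def IsWabConfig {V : Type} [Fintype V] (G : SimpleGraph V) (n m : ℕ)
    (p : Fin (n + 1) → V) (q : Fin (m + 1) → V) (v x y : V) : Prop :=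
  Function.Injective p ∧ Function.Injective q ∧
  Disjoint (Set.range p) (Set.range q) ∧
  v ∉ Set.range p ∧ x ∉ Set.range p ∧ y ∉ Set.range p ∧
  v ∉ Set.range q ∧ x ∉ Set.range q ∧ y ∉ Set.range q ∧
  v ≠ x ∧ v ≠ y ∧ x ≠ y ∧
  (∀ i : Fin n, G.Adj (p i.castSucc) (p i.succ)) ∧
  (∀ i : Fin m, G.Adj (q i.castSucc) (q i.succ)) ∧
  (∀ i, G.Adj v (p i)) ∧ (∀ i, G.Adj v (q i)) ∧
  G.Adj x (p 0) ∧ G.Adj x (q 0) ∧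
  G.Adj y (p (Fin.last n)) ∧ G.Adj y (q (Fin.last m)) ∧
  (∀ z ∈ wabVerts p q v x y, z ≠ v → gdeg G z = 3) ∧
  (G.induce (wabVerts p q v x y)ᶜ).Connected ∧
  (∃! w, w ∉ wabVerts p q v x y ∧ G.Adj x w) ∧
  (∃! w, w ∉ wabVerts p q v x y ∧ G.Adj y w) ∧
  (∀ z ∈ wabVerts p q v x y, z ≠ x → z ≠ y →
    ∀ w, w ∉ wabVerts p q v x y → ¬G.Adj z w)

/-- A subgraph `T` of `G` (on the same vertex set) is `G`-good if it contains no path of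
length 2 all of whose three vertices have degree at least 3 in `G` and degree 2 in `T`. -/
def GoodSubgraph {W : Type} (G T : SimpleGraph W) : Prop :=
  ¬∃ a b c : W, a ≠ c ∧ T.Adj a b ∧ T.Adj b c ∧
    gdeg T a = 2 ∧ gdeg T b = 2 ∧ gdeg T c = 2 ∧
    3 ≤ gdeg G a ∧ 3 ≤ gdeg G b ∧ 3 ≤ gdeg G c

lemma gdeg_eq_ncard {W : Type} (H : SimpleGraph W) (w : W) :
    gdeg H w = (H.neighborSet w).ncard := Nat.card_coe_set_eq _

lemma gdeg_mono {W : Type} [Finite W] {A B : SimpleGraph W} (h : A ≤ B) (w : W) :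
    gdeg A w ≤ gdeg B w := by
  rw [gdeg_eq_ncard, gdeg_eq_ncard]
  exact Set.ncard_le_ncard (fun z hz => h hz) (B.neighborSet w).toFinite

section Generic

variable {V : Type} [Fintype V]

omit [Fintype V] in
lemma conn_del {G : SimpleGraph V} {v w : V} (h : G.Connected)
    (hr : (G \ fromEdgeSet {s(v, w)}).Reachable v w) :
    (G \ fromEdgeSet {s(v, w)}).Connected := by
  have key : ∀ a b : V, G.Adj a b → (G \ fromEdgeSet {s(v, w)}).Reachable a b := by
    intro a b hab
    by_cases he : s(a, b) = s(v, w)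
    · rw [Sym2.eq_iff] at he
      rcases he with ⟨rfl, rfl⟩ | ⟨rfl, rfl⟩
      · exact hr
      · exact hr.symm
    · exact Adj.reachable (by simp [hab, he])
  have hpre : (G \ fromEdgeSet {s(v, w)}).Preconnected := by
    intro a b
    obtain ⟨p⟩ := h.preconnected a b
    induction p with
    | nil => exact Reachable.refl _
    | cons hadj _ ih => exact (key _ _ hadj).trans ih
  have : Nonempty V := h.nonempty
  exact Connected.mk hpre

lemma card_le_of_connected :
    ∀ (N : ℕ) (G : SimpleGraph V), G.edgeSet.ncard ≤ N → G.Connected →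
      Fintype.card V ≤ G.edgeSet.ncard + 1 := by
  intro N
  induction N with
  | zero =>
    intro G hN hc
    by_cases ha : G.IsAcyclic
    · classical
      have := IsTree.card_edgeFinset ⟨hc, ha⟩
      rw [← coe_edgeFinset, Set.ncard_coe_finset]
      omega
    · exfalso
      simp only [IsAcyclic, not_forall, not_not] at ha
      obtain ⟨u, c, hc'⟩ := ha
      have hne : c.edges ≠ [] := by
        intro h0
        have := hc'.three_le_length
        have := c.length_edges
        simp [h0] at this
        omega
      obtain ⟨e, he⟩ := List.exists_mem_of_ne_nil _ hne
      have : e ∈ G.edgeSet := c.edges_subset_edgeSet he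
      have : G.edgeSet.Nonempty := ⟨e, this⟩
      have := this.ncard_pos G.edgeSet.toFinite
      omega
  | succ N ih =>
    intro G hN hc
    by_cases ha : G.IsAcyclic
    · classical
      have := IsTree.card_edgeFinset ⟨hc, ha⟩
      rw [← coe_edgeFinset, Set.ncard_coe_finset]
      omega
    · simp only [IsAcyclic, not_forall, not_not] at ha
      obtain ⟨u, c, hc'⟩ := ha
      have hne : c.edges ≠ [] := by
        intro h0
        have := hc'.three_le_length
        have := c.length_edges
        simp [h0] at this
        omega
      obtain ⟨e, he⟩ := List.exists_mem_of_ne_nil _ hne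
      obtain ⟨⟨a, b⟩, rfl⟩ := Quot.exists_rep e
      have hadj : G.Adj a b := c.adj_of_mem_edges he
      have hnb : ¬ G.IsBridge s(a, b) := by
        rw [isBridge_iff_adj_and_forall_cycle_notMem]
        push_neg
        exact ⟨u, c, hc', he⟩
        exact hadj
      rw [isBridge_iff] at hnb
      push_neg at hnb
      have hreach := hnb
      have hconn' := conn_del hc hreach
      have hedge : (G \ fromEdgeSet {s(a, b)}).edgeSet = G.edgeSet \ {s(a, b)} := by
        rw [edgeSet_sdiff, edgeSet_fromEdgeSet, edgeSet_sdiff_sdiff_isDiag]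
      have hmem : s(a, b) ∈ G.edgeSet := hadj
      have hcard : (G \ fromEdgeSet {s(a, b)}).edgeSet.ncard = G.edgeSet.ncard - 1 := by
        rw [hedge, Set.ncard_diff_singleton_of_mem hmem]
      have hne2 : G.edgeSet.Nonempty := ⟨_, hmem⟩
      have hpos := hne2.ncard_pos G.edgeSet.toFinite
      have := ih (G \ fromEdgeSet {s(a, b)}) (by omega) hconn'
      omega

lemma isTree_of_connected_of_card {G : SimpleGraph V} (hc : G.Connected)
    (hcard : G.edgeSet.ncard + 1 = Fintype.card V) : G.IsTree := by
  refine ⟨hc, ?_⟩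
  intro u c hc'
  have hne : c.edges ≠ [] := by
    intro h0
    have := hc'.three_le_length
    have := c.length_edges
    simp [h0] at this
    omega
  obtain ⟨e, he⟩ := List.exists_mem_of_ne_nil _ hne
  obtain ⟨⟨a, b⟩, rfl⟩ := Quot.exists_rep e
  have hadj : G.Adj a b := c.adj_of_mem_edges he
  have hnb : ¬ G.IsBridge s(a, b) := by
    rw [isBridge_iff_adj_and_forall_cycle_notMem]
    push_neg
    exact ⟨u, c, hc', he⟩
    exact hadj
  rw [isBridge_iff] at hnb
  push_neg at hnb
  have hconn' := conn_del hc hnb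
  have hedge : (G \ fromEdgeSet {s(a, b)}).edgeSet = G.edgeSet \ {s(a, b)} := by
    rw [edgeSet_sdiff, edgeSet_fromEdgeSet, edgeSet_sdiff_sdiff_isDiag]
  have hmem : s(a, b) ∈ G.edgeSet := hadj
  have hcard' : (G \ fromEdgeSet {s(a, b)}).edgeSet.ncard = G.edgeSet.ncard - 1 := by
    rw [hedge, Set.ncard_diff_singleton_of_mem hmem]
  have hne2 : G.edgeSet.Nonempty := ⟨_, hmem⟩
  have hpos := hne2.ncard_pos G.edgeSet.toFinite
  have := card_le_of_connected _ (G \ fromEdgeSet {s(a, b)}) le_rfl hconn'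
  omega


lemma extend_good_tree (G : SimpleGraph V) (K : Set V) (x y : V)
    (hxK : x ∈ K) (hyK : y ∈ K) (hxy : x ≠ y)
    (f : V → V) (r : V → ℕ)
    (hfa : ∀ a, a ∉ K → G.Adj a (f a))
    (hfK : ∀ a, a ∉ K → f a ∈ K → f a = x)
    (hfr : ∀ a, a ∉ K → r (f a) < r a)
    (hcx : ∃ z w : V, z ∉ K ∧ w ∉ K ∧ z ≠ w ∧ f z = x ∧ f w = x)
    (h3 : ∀ b, b ∉ K → f b ≠ x → ∀ z, z ∉ K → f z = b → ∀ w, w ∉ K → f w = z → False)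
    (hdeg : ∀ z, ∀ hz : z ∈ K, z ≠ x →
        gdeg (G.induce K) ⟨z, hz⟩ = gdeg G z ∨ gdeg (G.induce K) ⟨z, hz⟩ ≤ 1)
    (T' : SimpleGraph ↥K) (hT'le : T' ≤ G.induce K) (hT'tree : T'.IsTree)
    (hT'good : GoodSubgraph (G.induce K) T') :
    ∃ T : SimpleGraph V, T ≤ G ∧ T.IsTree ∧ GoodSubgraph G T := by
  classical
  have hfne : ∀ a, a ∉ K → f a ≠ a := by
    intro a ha h
    have := hfr a ha
    rw [h] at this
    exact absurd this (lt_irrefl _)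
  -- the forest of new edges
  let F : SimpleGraph V :=
    { Adj := fun a b => (a ∉ K ∧ f a = b) ∨ (b ∉ K ∧ f b = a)
      symm := by constructor; intro a b h; tauto
      loopless := by
        constructor
        intro a h
        rcases h with ⟨ha, h⟩ | ⟨ha, h⟩ <;> exact hfne a ha h }
  have hFadj : ∀ a b : V, F.Adj a b ↔ (a ∉ K ∧ f a = b) ∨ (b ∉ K ∧ f b = a) := fun _ _ => Iff.rfl
  let emb : ↥K ↪ V := Function.Embedding.subtype _
  let LT := T'.map emb
  let T := LT ⊔ F
  have hLTadj : ∀ a b : V, LT.Adj a b ↔ ∃ (ha : a ∈ K) (hb : b ∈ K), T'.Adj ⟨a, ha⟩ ⟨b, hb⟩ := by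
    intro a b
    constructor
    · rintro ⟨-, a', b', h, rfl, rfl⟩
      exact ⟨a'.2, b'.2, h⟩
    · rintro ⟨ha, hb, h⟩
      exact ⟨fun hab => h.ne (Subtype.ext hab), ⟨a, ha⟩, ⟨b, hb⟩, h, rfl, rfl⟩
  have hTadj : ∀ a b : V, T.Adj a b ↔ LT.Adj a b ∨ F.Adj a b := fun _ _ => sup_adj _ _ _ _
  -- T ≤ G
  have hTle : T ≤ G := by
    intro a b hab
    rcases (hTadj a b).1 hab with h | h
    · obtain ⟨ha, hb, h⟩ := (hLTadj a b).1 h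
      exact hT'le h
    · rcases (hFadj a b).1 h with ⟨ha, h⟩ | ⟨hb, h⟩
      · exact h ▸ hfa a ha
      · exact (h ▸ hfa b hb).symm
  -- neighbor sets
  have hNout : ∀ b, b ∉ K → T.neighborSet b = insert (f b) {z | z ∉ K ∧ f z = b} := by
    intro b hb
    ext w
    simp only [mem_neighborSet, Set.mem_insert_iff, Set.mem_setOf_eq]
    constructor
    · intro h
      rcases (hTadj b w).1 h with h | h
      · exact absurd ((hLTadj b w).1 h).fst hb
      · rcases (hFadj b w).1 h with ⟨_, h⟩ | ⟨hw, h⟩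
        · exact Or.inl h.symm
        · exact Or.inr ⟨hw, h⟩
    · intro h
      rcases h with rfl | ⟨hw, hfw⟩
      · exact (hTadj b (f b)).2 (Or.inr ((hFadj b (f b)).2 (Or.inl ⟨hb, rfl⟩)))
      · exact (hTadj b w).2 (Or.inr ((hFadj b w).2 (Or.inr ⟨hw, hfw⟩)))
  have hNin : ∀ z, ∀ hz : z ∈ K, z ≠ x →
      T.neighborSet z = Subtype.val '' (T'.neighborSet ⟨z, hz⟩) := by
    intro z hz hzx
    ext w
    simp only [mem_neighborSet, Set.mem_image]
    constructor
    · intro h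
      rcases (hTadj z w).1 h with h | h
      · obtain ⟨hz', hw, h⟩ := (hLTadj z w).1 h
        exact ⟨⟨w, hw⟩, h, rfl⟩
      · rcases (hFadj z w).1 h with ⟨hz', _⟩ | ⟨hw, hfw⟩
        · exact absurd hz hz'
        · exact absurd (hfw ▸ hfK w hw (hfw ▸ hz)) (hfw ▸ hzx)
    · rintro ⟨w', h, rfl⟩
      exact (hTadj z w').2 (Or.inl ((hLTadj z w').2 ⟨hz, w'.2, h⟩))
  -- degree of vertices outside K
  have hDout : ∀ b, b ∉ K → gdeg T b = 1 + {z | z ∉ K ∧ f z = b}.ncard := by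
    intro b hb
    have hfb : f b ∉ {z | z ∉ K ∧ f z = b} := by
      rintro ⟨h1, h2⟩
      have t1 := hfr b hb
      have t2 := hfr (f b) h1
      rw [h2] at t2
      omega
    rw [gdeg_eq_ncard, hNout b hb, Set.ncard_insert_of_notMem hfb]
    omega
  -- degree of vertices in K other than x
  have hDin : ∀ z, ∀ hz : z ∈ K, z ≠ x → gdeg T z = gdeg T' ⟨z, hz⟩ := by
    intro z hz hzx
    rw [gdeg_eq_ncard, hNin z hz hzx, Set.ncard_image_of_injective _ Subtype.val_injective,
      gdeg_eq_ncard]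
  -- degree of x is at least 3
  obtain ⟨z1, z2, hz1, hz2, hz12, hfz1, hfz2⟩ := hcx
  have hxyK : (⟨x, hxK⟩ : ↥K) ≠ ⟨y, hyK⟩ := fun h => hxy (congrArg Subtype.val h)
  have hkex : ∃ k : ↥K, T'.Adj ⟨x, hxK⟩ k := by
    obtain ⟨w0⟩ := hT'tree.isConnected.preconnected ⟨x, hxK⟩ ⟨y, hyK⟩
    cases w0 with
    | nil => exact absurd rfl hxyK
    | cons h p => exact ⟨_, h⟩
  obtain ⟨k, hk⟩ := hkex
  have hdegx : 3 ≤ gdeg T x := by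
    have hsub : {z1, z2, (k : V)} ⊆ T.neighborSet x := by
      intro w hw
      rcases hw with rfl | rfl | rfl
      · exact (hTadj x w).2 (Or.inr ((hFadj x w).2 (Or.inr ⟨hz1, hfz1⟩)))
      · exact (hTadj x w).2 (Or.inr ((hFadj x w).2 (Or.inr ⟨hz2, hfz2⟩)))
      · exact (hTadj x (k : V)).2 (Or.inl ((hLTadj x (k : V)).2 ⟨hxK, k.2, hk⟩))
    have h1 : z1 ∉ ({z2, (k : V)} : Set V) := by
      rintro (rfl | rfl)
      · exact hz12 rfl
      · exact hz1 k.2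
    have h2 : z2 ∉ ({(k : V)} : Set V) := by
      rintro rfl
      exact hz2 k.2
    have hc3 : ({z1, z2, (k : V)} : Set V).ncard = 3 := by
      rw [Set.ncard_insert_of_notMem h1, Set.ncard_insert_of_notMem h2, Set.ncard_singleton]
    rw [gdeg_eq_ncard]
    calc 3 = ({z1, z2, (k : V)} : Set V).ncard := hc3.symm
      _ ≤ (T.neighborSet x).ncard := Set.ncard_le_ncard hsub (T.neighborSet x).toFinite
  -- connectivity
  have hreachx : ∀ z, T.Reachable z x := by
    have hK : ∀ z (hz : z ∈ K), T.Reachable z x := by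
      intro z hz
      have hr : T'.Reachable ⟨z, hz⟩ ⟨x, hxK⟩ := hT'tree.isConnected.preconnected _ _
      exact Reachable.map
        (⟨fun a => (a : V), fun {a b} h =>
          (hTadj _ _).2 (Or.inl ((hLTadj _ _).2 ⟨a.2, b.2, h⟩))⟩ : T' →g T) hr
    have hAux : ∀ n, ∀ z, z ∉ K → r z ≤ n → T.Reachable z x := by
      intro n
      induction n with
      | zero => intro z hz hr0; exact absurd (hfr z hz) (by omega)
      | succ n ih =>
        intro z hz hrn
        have hadj : T.Adj z (f z) :=
          (hTadj z (f z)).2 (Or.inr ((hFadj z (f z)).2 (Or.inl ⟨hz, rfl⟩)))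
        by_cases hfz : f z ∈ K
        · rw [hfK z hz hfz] at hadj
          exact hadj.reachable
        · have : r (f z) ≤ n := by have := hfr z hz; omega
          exact hadj.reachable.trans (ih (f z) hfz this)
    intro z
    by_cases hz : z ∈ K
    · exact hK z hz
    · exact hAux (r z) z hz le_rfl
  have hTconn : T.Connected := by
    have : Nonempty V := ⟨x⟩
    exact Connected.mk (fun a b => (hreachx a).trans (hreachx b).symm)
  -- edge counting
  have hEsup : T.edgeSet = LT.edgeSet ∪ F.edgeSet := edgeSet_sup LT F
  have hdisj : Disjoint LT.edgeSet F.edgeSet := by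
    rw [Set.disjoint_left]
    intro e he1 he2
    induction e with
    | _ a b =>
      obtain ⟨ha, hb, _⟩ := (hLTadj a b).1 he1
      rcases (hFadj a b).1 he2 with ⟨h, _⟩ | ⟨h, _⟩
      · exact h ha
      · exact h hb
  have hLTcard : LT.edgeSet.ncard = T'.edgeSet.ncard := by
    have : LT.edgeSet = Sym2.map Subtype.val '' T'.edgeSet := by
      ext e
      induction e with
      | _ a b =>
        constructor
        · intro h
          obtain ⟨ha, hb, h⟩ := (hLTadj a b).1 h
          exact ⟨s(⟨a, ha⟩, ⟨b, hb⟩), h, by rw [Sym2.map_pair_eq]⟩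
        · rintro ⟨e', he', hmap⟩
          induction e' with
          | _ a' b' =>
            rw [Sym2.map_pair_eq, Sym2.eq_iff] at hmap
            rcases hmap with ⟨rfl, rfl⟩ | ⟨rfl, rfl⟩
            · exact (hLTadj _ _).2 ⟨a'.2, b'.2, he'⟩
            · exact (hLTadj _ _).2 ⟨b'.2, a'.2, he'.symm⟩
    rw [this, Set.ncard_image_of_injective _ (Sym2.map.injective Subtype.val_injective)]
  have hFcard : F.edgeSet.ncard = Kᶜ.ncard := by
    have : F.edgeSet = (fun a => s(a, f a)) '' Kᶜ := by
      ext e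
      induction e with
      | _ a b =>
        constructor
        · intro h
          rcases (hFadj a b).1 h with ⟨ha, hf⟩ | ⟨hb, hf⟩
          · exact ⟨a, ha, by show s(a, f a) = s(a, b); rw [hf]⟩
          · refine ⟨b, hb, ?_⟩
            show s(b, f b) = s(a, b)
            rw [hf]
            exact Sym2.eq_swap
        · rintro ⟨a', ha', hmap⟩
          have hmap' : s(a', f a') = s(a, b) := hmap
          rw [Sym2.eq_iff] at hmap'
          rcases hmap' with ⟨rfl, rfl⟩ | ⟨rfl, rfl⟩
          · exact (hFadj _ _).2 (Or.inl ⟨ha', rfl⟩)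
          · exact (hFadj _ _).2 (Or.inr ⟨ha', rfl⟩)
    rw [this]
    apply Set.ncard_image_of_injOn
    intro a ha b hb hab
    have hab' : s(a, f a) = s(b, f b) := hab
    rw [Sym2.eq_iff] at hab'
    rcases hab' with ⟨h1, _⟩ | ⟨h1, h2⟩
    · exact h1
    · exfalso
      have t1 := hfr a ha
      have t2 := hfr b hb
      rw [h2] at t1
      rw [← h1] at t2
      omega
  have hT'card : T'.edgeSet.ncard + 1 = K.ncard := by
    have h1 := hT'tree.card_edgeFinset
    have h2 : T'.edgeSet.ncard = T'.edgeFinset.card := by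
      rw [← coe_edgeFinset, Set.ncard_coe_finset]
    have h3 : Fintype.card ↥K = K.ncard := by
      rw [← Nat.card_eq_fintype_card, Nat.card_coe_set_eq]
    omega
  have hTcard : T.edgeSet.ncard + 1 = Fintype.card V := by
    have h1 : T.edgeSet.ncard = LT.edgeSet.ncard + F.edgeSet.ncard := by
      rw [hEsup, Set.ncard_union_eq hdisj]
    have h2 := K.ncard_add_ncard_compl
    have h3 : Nat.card V = Fintype.card V := Nat.card_eq_fintype_card
    omega
  have hTtree : T.IsTree := isTree_of_connected_of_card hTconn hTcard
  -- goodness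
  refine ⟨T, hTle, hTtree, ?_⟩
  rintro ⟨a, b, c, hac, hab, hbc, hda, hdb, hdc, hGa, hGb, hGc⟩
  have hnex : ∀ w : V, gdeg T w = 2 → w ≠ x := by
    rintro w hw rfl
    omega
  have hax := hnex a hda
  have hbx := hnex b hdb
  have hcx' := hnex c hdc
  by_cases hbK : b ∈ K
  · -- the bad path lives in K; push it down to T'
    have hmemN : ∀ w, T.Adj b w → ∃ hw : w ∈ K, T'.Adj ⟨b, hbK⟩ ⟨w, hw⟩ := by
      intro w hw
      have hmem : w ∈ T.neighborSet b := hw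
      rw [hNin b hbK hbx] at hmem
      obtain ⟨w', hw', rfl⟩ := hmem
      exact ⟨w'.2, hw'⟩
    obtain ⟨haK, hba⟩ := hmemN a hab.symm
    obtain ⟨hcK, hbc'⟩ := hmemN c hbc
    have hdT'a : gdeg T' ⟨a, haK⟩ = 2 := by rw [← hDin a haK hax]; exact hda
    have hdT'b : gdeg T' ⟨b, hbK⟩ = 2 := by rw [← hDin b hbK hbx]; exact hdb
    have hdT'c : gdeg T' ⟨c, hcK⟩ = 2 := by rw [← hDin c hcK hcx']; exact hdc
    have hG' : ∀ (w : V) (hw : w ∈ K), w ≠ x → gdeg T' ⟨w, hw⟩ = 2 →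
        3 ≤ gdeg G w → 3 ≤ gdeg (G.induce K) ⟨w, hw⟩ := by
      intro w hw hwx hdw hGw
      rcases hdeg w hw hwx with h | h
      · rw [h]; exact hGw
      · exfalso
        have := gdeg_mono hT'le (⟨w, hw⟩ : ↥K)
        omega
    exact hT'good ⟨⟨a, haK⟩, ⟨b, hbK⟩, ⟨c, hcK⟩, fun h => hac (congrArg Subtype.val h),
      hba.symm, hbc', hdT'a, hdT'b, hdT'c,
      hG' a haK hax hdT'a hGa, hG' b hbK hbx hdT'b hGb, hG' c hcK hcx' hdT'c hGc⟩
  · -- b is outside K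
    have hdb2 := hDout b hbK
    have hcb1 : {z | z ∉ K ∧ f z = b}.ncard = 1 := by rw [hdb2] at hdb; omega
    obtain ⟨z0, hz0⟩ := Set.ncard_eq_one.1 hcb1
    have hz0mem : z0 ∉ K ∧ f z0 = b := by
      have h0 : z0 ∈ {z | z ∉ K ∧ f z = b} := by rw [hz0]; exact rfl
      exact h0
    have hNb : T.neighborSet b = {f b, z0} := by rw [hNout b hbK, hz0]
    have hamem : a ∈ ({f b, z0} : Set V) := by rw [← hNb]; exact hab.symm
    have hcmem : c ∈ ({f b, z0} : Set V) := by rw [← hNb]; exact hbc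
    simp only [Set.mem_insert_iff, Set.mem_singleton_iff] at hamem hcmem
    have hkey : gdeg T z0 = 2 ∧ f b ≠ x := by
      rcases hamem with ha1 | ha1
      · rcases hcmem with hc1 | hc1
        · exact absurd (ha1.trans hc1.symm) hac
        · exact ⟨hc1 ▸ hdc, ha1 ▸ hax⟩
      · rcases hcmem with hc1 | hc1
        · exact ⟨ha1 ▸ hda, hc1 ▸ hcx'⟩
        · exact absurd (ha1.trans hc1.symm) hac
    obtain ⟨hz0deg, hfbx⟩ := hkey
    have hz0deg2 := hDout z0 hz0mem.1
    rw [hz0deg2] at hz0deg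
    have hcz1 : {z | z ∉ K ∧ f z = z0}.ncard = 1 := by omega
    obtain ⟨w0, hw0⟩ := Set.ncard_eq_one.1 hcz1
    have hw0mem : w0 ∉ K ∧ f w0 = z0 := by
      have h0 : w0 ∈ {z | z ∉ K ∧ f z = z0} := by rw [hw0]; exact rfl
      exact h0
    exact h3 b hbK hfbx z0 hz0mem.1 hz0mem.2 w0 hw0mem.1 hw0mem.2


lemma hdeg_helper {V : Type} [Fintype V] (G : SimpleGraph V) (Hs : Set V) (x y : V)
    (n1 n2 n3 : V) (h12 : n1 ≠ n2)
    (h1H : n1 ∈ Hs \ {x, y}) (h2H : n2 ∈ Hs \ {x, y}) (h3H : n3 ∉ Hs)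
    (ha1 : G.Adj y n1) (ha2 : G.Adj y n2) (ha3 : G.Adj y n3)
    (hdy : gdeg G y = 3)
    (hnoadj : ∀ z ∈ Hs, z ≠ x → z ≠ y → ∀ w, w ∉ Hs → ¬G.Adj z w) :
    ∀ z, ∀ hz : z ∈ (Hs \ {x, y} : Set V)ᶜ, z ≠ x →
      gdeg (G.induce (Hs \ {x, y} : Set V)ᶜ) ⟨z, hz⟩ = gdeg G z ∨
      gdeg (G.induce (Hs \ {x, y} : Set V)ᶜ) ⟨z, hz⟩ ≤ 1 := by
  classical
  intro z hz hzx
  have hzK : z ∉ Hs ∨ z = y := by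
    by_contra h
    push_neg at h
    exact hz ⟨h.1, by simp [hzx, h.2]⟩
  rcases hzK with hzH | rfl
  · -- z outside the configuration: degrees agree
    left
    have himg : Subtype.val '' (G.induce (Hs \ {x, y} : Set V)ᶜ).neighborSet
        ⟨z, hz⟩ = G.neighborSet z := by
      ext u
      constructor
      · rintro ⟨u', hu', rfl⟩
        exact hu'
      · intro hu
        have huK : u ∈ (Hs \ {x, y} : Set V)ᶜ := by
          intro huA
          exact hnoadj u huA.1 (by simp at huA; tauto) (by simp at huA; tauto) z hzH hu.symm
        exact ⟨⟨u, huK⟩, hu, rfl⟩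
    rw [gdeg_eq_ncard, gdeg_eq_ncard, ← himg,
      Set.ncard_image_of_injective _ Subtype.val_injective]
  · -- z = y : at most one neighbour
    right
    have h13 : n1 ≠ n3 := fun h => h3H (h ▸ h1H.1)
    have h23 : n2 ≠ n3 := fun h => h3H (h ▸ h2H.1)
    have hNy : G.neighborSet z = {n1, n2, n3} := by
      have hsub : ({n1, n2, n3} : Set V) ⊆ G.neighborSet z := by
        intro u hu
        rcases hu with rfl | rfl | rfl
        · exact ha1
        · exact ha2
        · exact ha3
      have hc3 : ({n1, n2, n3} : Set V).ncard = 3 := by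
        rw [Set.ncard_insert_of_notMem (by simp [h12, h13]),
          Set.ncard_insert_of_notMem (by simp [h23]), Set.ncard_singleton]
      refine (Set.eq_of_subset_of_ncard_le hsub ?_ (G.neighborSet z).toFinite).symm
      rw [hc3, ← gdeg_eq_ncard, hdy]
    have hn3K : n3 ∈ (Hs \ {x, z} : Set V)ᶜ := fun h => h3H h.1
    have hsub : (G.induce (Hs \ {x, z} : Set V)ᶜ).neighborSet ⟨z, hz⟩ ⊆
        {(⟨n3, hn3K⟩ : ↥(Hs \ {x, z} : Set V)ᶜ)} := by
      intro u hu
      have hGadj : G.Adj z (u : V) := hu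
      have : (u : V) ∈ G.neighborSet z := hGadj
      rw [hNy] at this
      rcases this with h | h | h
      · exact absurd h1H ((h ▸ u.2 : (n1 : V) ∈ _))
      · exact absurd h2H ((h ▸ u.2 : (n2 : V) ∈ _))
      · exact Set.mem_singleton_iff.2 (Subtype.ext h)
    calc gdeg _ ⟨z, hz⟩ = _ := gdeg_eq_ncard _ _
      _ ≤ ({(⟨n3, hn3K⟩ : ↥(Hs \ {x, z} : Set V)ᶜ)} : Set _).ncard :=
        Set.ncard_le_ncard hsub (Set.toFinite _)
      _ = 1 := Set.ncard_singleton _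

/-- Let `G` be a finite simple connected graph containing a `W_a`- or `W_{a,b}`-configuration
with vertex set `Hs`, centre `v` and connectors `x, y`, and let `G' = G − (Hs \ {x, y})`.
If `G'` has a `G'`-good spanning tree, then `G` has a `G`-good spanning tree. -/
theorem stmt_15 (V : Type) [Fintype V] (G : SimpleGraph V) (hconn : G.Connected)
    (v x y : V) (Hs : Set V)
    (hH : (∃ (n : ℕ) (p : Fin (n + 1) → V),
            IsWaConfig G n p v x y ∧ Hs = waVerts p v x y) ∨
          (∃ (n m : ℕ) (p : Fin (n + 1) → V) (q : Fin (m + 1) → V),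
            IsWabConfig G n m p q v x y ∧ Hs = wabVerts p q v x y))
    (hG' : ∃ T : SimpleGraph ↥(Hs \ {x, y} : Set V)ᶜ,
            T ≤ G.induce (Hs \ {x, y} : Set V)ᶜ ∧ T.IsTree ∧
            GoodSubgraph (G.induce (Hs \ {x, y} : Set V)ᶜ) T) :
    ∃ T : SimpleGraph V, T ≤ G ∧ T.IsTree ∧ GoodSubgraph G T := by
  classical
  obtain ⟨T', hT'le, hT'tree, hT'good⟩ := hG'
  rcases hH with ⟨n, p, hcfg, rfl⟩ | ⟨n, m, p, q, hcfg, rfl⟩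
  · -- W_a configuration
    obtain ⟨hpinj, hvp, hxp, hyp, hvx, hvy, hxy, hpath, hvadj, hvxadj, hvyadj, hxp0, hyplast,
      hdeg3, hGconn, hxout, hyout, hnoadj⟩ := hcfg
    have hvH : v ∈ waVerts p v x y := by simp [waVerts]
    have hyH : y ∈ waVerts p v x y := by simp [waVerts]
    have hpH : ∀ i, p i ∈ waVerts p v x y := fun i => by
      simp only [waVerts, Set.mem_union]
      exact Or.inr ⟨i, rfl⟩
    have hxK : x ∈ (waVerts p v x y \ ({x, y} : Set V))ᶜ := fun h => h.2 (Or.inl rfl)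
    have hyK : y ∈ (waVerts p v x y \ ({x, y} : Set V))ᶜ := fun h => h.2 (Or.inr rfl)
    have hnotK : ∀ a : V, a ∉ (waVerts p v x y \ ({x, y} : Set V))ᶜ ↔
        (a = v ∨ a ∈ Set.range p) := by
      intro a
      rw [Set.notMem_compl_iff]
      constructor
      · rintro ⟨h1, h2⟩
        simp only [waVerts, Set.mem_union, Set.mem_insert_iff, Set.mem_singleton_iff] at h1
        simp only [Set.mem_insert_iff, Set.mem_singleton_iff] at h2
        push_neg at h2
        rcases h1 with (rfl | rfl | rfl) | h1
        · exact Or.inl rfl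
        · exact absurd rfl h2.1
        · exact absurd rfl h2.2
        · exact Or.inr h1
      · intro h
        refine ⟨?_, ?_⟩
        · simp only [waVerts, Set.mem_union, Set.mem_insert_iff, Set.mem_singleton_iff]
          rcases h with rfl | h
          · exact Or.inl (Or.inl rfl)
          · exact Or.inr h
        · simp only [Set.mem_insert_iff, Set.mem_singleton_iff]
          push_neg
          rcases h with rfl | ⟨i, rfl⟩
          · exact ⟨hvx, hvy⟩
          · exact ⟨fun h => hxp ⟨i, h⟩, fun h => hyp ⟨i, h⟩⟩
    set f : V → V := fun z => if z = v ∨ z = p 0 then x else v with hf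
    set r : V → ℕ := fun z => if z = x then 0 else if z = v ∨ z = p 0 then 1 else 2 with hr
    have hfv : f v = x := if_pos (Or.inl rfl)
    have hfp0 : f (p 0) = x := if_pos (Or.inr rfl)
    have hfpi : ∀ i : Fin (n + 1), i ≠ 0 → f (p i) = v := by
      intro i hi
      apply if_neg
      rintro (h | h)
      · exact hvp ⟨i, h⟩
      · exact hi (hpinj h)
    have hrx : r x = 0 := if_pos rfl
    have hrv : r v = 1 := (if_neg hvx).trans (if_pos (Or.inl rfl))
    have hrp0 : r (p 0) = 1 :=
      (if_neg (fun h => hxp ⟨0, h⟩)).trans (if_pos (Or.inr rfl))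
    have hrpi : ∀ i : Fin (n + 1), i ≠ 0 → r (p i) = 2 := by
      intro i hi
      refine (if_neg (fun h => hxp ⟨i, h⟩)).trans (if_neg ?_)
      rintro (h | h)
      · exact hvp ⟨i, h⟩
      · exact hi (hpinj h)
    have hvnotK : v ∉ (waVerts p v x y \ ({x, y} : Set V))ᶜ := (hnotK v).2 (Or.inl rfl)
    have hp0notK : p 0 ∉ (waVerts p v x y \ ({x, y} : Set V))ᶜ := (hnotK (p 0)).2 (Or.inr ⟨0, rfl⟩)
    have hfval : ∀ a, f a = x ∨ f a = v := by
      intro a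
      rw [hf]
      dsimp only
      split
      · exact Or.inl rfl
      · exact Or.inr rfl
    have hfa : ∀ a, a ∉ (waVerts p v x y \ ({x, y} : Set V))ᶜ → G.Adj a (f a) := by
      intro a ha
      rcases (hnotK a).1 ha with rfl | ⟨i, rfl⟩
      · rw [hfv]; exact hvxadj
      · by_cases hi : i = 0
        · subst hi; rw [hfp0]; exact hxp0.symm
        · rw [hfpi i hi]; exact (hvadj i).symm
    have hfK : ∀ a, a ∉ (waVerts p v x y \ ({x, y} : Set V))ᶜ →
        f a ∈ (waVerts p v x y \ ({x, y} : Set V))ᶜ → f a = x := by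
      intro a ha hin
      rcases hfval a with h | h
      · exact h
      · exact absurd (h ▸ hin) hvnotK
    have hfr : ∀ a, a ∉ (waVerts p v x y \ ({x, y} : Set V))ᶜ → r (f a) < r a := by
      intro a ha
      rcases (hnotK a).1 ha with rfl | ⟨i, rfl⟩
      · rw [hfv, hrx, hrv]; omega
      · by_cases hi : i = 0
        · subst hi; rw [hfp0, hrx, hrp0]; omega
        · rw [hfpi i hi, hrv, hrpi i hi]; omega
    have hcx : ∃ z w : V, z ∉ (waVerts p v x y \ ({x, y} : Set V))ᶜ ∧
        w ∉ (waVerts p v x y \ ({x, y} : Set V))ᶜ ∧ z ≠ w ∧ f z = x ∧ f w = x :=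
      ⟨v, p 0, hvnotK, hp0notK, fun h => hvp ⟨0, h.symm⟩, hfv, hfp0⟩
    have h3 : ∀ b, b ∉ (waVerts p v x y \ ({x, y} : Set V))ᶜ → f b ≠ x →
        ∀ z, z ∉ (waVerts p v x y \ ({x, y} : Set V))ᶜ → f z = b →
        ∀ w, w ∉ (waVerts p v x y \ ({x, y} : Set V))ᶜ → f w = z → False := by
      intro b hb hfbx z hz hfz w hw hfw
      have hbval : b = x ∨ b = v := by rw [← hfz]; exact hfval z
      rcases hbval with h | h
      · rw [h] at hb; exact hb hxK
      · rw [h] at hfbx; exact hfbx hfv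
    obtain ⟨wy, ⟨hwyH, hwyadj⟩, -⟩ := hyout
    have hvnm : v ∉ ({x, y} : Set V) := by
      simp only [Set.mem_insert_iff, Set.mem_singleton_iff]
      push_neg
      exact ⟨hvx, hvy⟩
    have hplastnm : p (Fin.last n) ∉ ({x, y} : Set V) := by
      simp only [Set.mem_insert_iff, Set.mem_singleton_iff]
      push_neg
      exact ⟨fun h => hxp ⟨_, h⟩, fun h => hyp ⟨_, h⟩⟩
    have hdeg := hdeg_helper G (waVerts p v x y) x y v (p (Fin.last n)) wy
      (fun h => hvp ⟨_, h.symm⟩)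
      ⟨hvH, hvnm⟩ ⟨hpH _, hplastnm⟩
      hwyH hvyadj.symm hyplast hwyadj
      (hdeg3 y hyH (fun h => hvy h.symm)) hnoadj
    exact extend_good_tree G ((waVerts p v x y \ ({x, y} : Set V))ᶜ) x y hxK hyK hxy f r
      hfa hfK hfr hcx h3 hdeg T' hT'le hT'tree hT'good
  · -- W_{a,b} configuration
    obtain ⟨hpinj, hqinj, hdisjpq, hvp, hxp, hyp, hvq, hxq, hyq, hvx, hvy, hxy, hpath, hqpath,
      hvadjp, hvadjq, hxp0, hxq0, hyplast, hyqlast, hdeg3, hGconn, hxout, hyout, hnoadj⟩ := hcfg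
    have hpq : ∀ (i : Fin (n + 1)) (j : Fin (m + 1)), p i ≠ q j := fun i j h =>
      Set.disjoint_left.1 hdisjpq ⟨i, rfl⟩ ⟨j, h.symm⟩
    have hvH : v ∈ wabVerts p q v x y := by simp [wabVerts]
    have hyH : y ∈ wabVerts p q v x y := by simp [wabVerts]
    have hpH : ∀ i, p i ∈ wabVerts p q v x y := fun i => by
      simp only [wabVerts, Set.mem_union]
      exact Or.inl (Or.inr ⟨i, rfl⟩)
    have hqH : ∀ j, q j ∈ wabVerts p q v x y := fun j => by
      simp only [wabVerts, Set.mem_union]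
      exact Or.inr ⟨j, rfl⟩
    have hxK : x ∈ (wabVerts p q v x y \ ({x, y} : Set V))ᶜ := fun h => h.2 (Or.inl rfl)
    have hyK : y ∈ (wabVerts p q v x y \ ({x, y} : Set V))ᶜ := fun h => h.2 (Or.inr rfl)
    have hnotK : ∀ a : V, a ∉ (wabVerts p q v x y \ ({x, y} : Set V))ᶜ ↔
        (a = v ∨ a ∈ Set.range p ∨ a ∈ Set.range q) := by
      intro a
      rw [Set.notMem_compl_iff]
      constructor
      · rintro ⟨h1, h2⟩
        simp only [wabVerts, Set.mem_union, Set.mem_insert_iff, Set.mem_singleton_iff] at h1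
        simp only [Set.mem_insert_iff, Set.mem_singleton_iff] at h2
        push_neg at h2
        rcases h1 with ((rfl | rfl | rfl) | h1) | h1
        · exact Or.inl rfl
        · exact absurd rfl h2.1
        · exact absurd rfl h2.2
        · exact Or.inr (Or.inl h1)
        · exact Or.inr (Or.inr h1)
      · intro h
        refine ⟨?_, ?_⟩
        · simp only [wabVerts, Set.mem_union, Set.mem_insert_iff, Set.mem_singleton_iff]
          rcases h with rfl | h | h
          · exact Or.inl (Or.inl (Or.inl rfl))
          · exact Or.inl (Or.inr h)
          · exact Or.inr h
        · simp only [Set.mem_insert_iff, Set.mem_singleton_iff]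
          push_neg
          rcases h with rfl | ⟨i, rfl⟩ | ⟨j, rfl⟩
          · exact ⟨hvx, hvy⟩
          · exact ⟨fun h => hxp ⟨i, h⟩, fun h => hyp ⟨i, h⟩⟩
          · exact ⟨fun h => hxq ⟨j, h⟩, fun h => hyq ⟨j, h⟩⟩
    set f : V → V := fun z => if z = p 0 ∨ z = q 0 then x else if z = v then p 0 else v with hf
    set r : V → ℕ := fun z =>
      if z = x then 0 else if z = p 0 ∨ z = q 0 then 1 else if z = v then 2 else 3 with hr
    have hncv : ¬(v = p 0 ∨ v = q 0) := by
      rintro (h | h)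
      · exact hvp ⟨0, h.symm⟩
      · exact hvq ⟨0, h.symm⟩
    have hfp0 : f (p 0) = x := if_pos (Or.inl rfl)
    have hfq0 : f (q 0) = x := if_pos (Or.inr rfl)
    have hfv : f v = p 0 := (if_neg hncv).trans (if_pos rfl)
    have hncpi : ∀ i : Fin (n + 1), i ≠ 0 → ¬(p i = p 0 ∨ p i = q 0) := by
      rintro i hi (h | h)
      · exact hi (hpinj h)
      · exact hpq i 0 h
    have hncqj : ∀ j : Fin (m + 1), j ≠ 0 → ¬(q j = p 0 ∨ q j = q 0) := by
      rintro j hj (h | h)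
      · exact hpq 0 j h.symm
      · exact hj (hqinj h)
    have hfpi : ∀ i : Fin (n + 1), i ≠ 0 → f (p i) = v := fun i hi =>
      (if_neg (hncpi i hi)).trans (if_neg (fun h => hvp ⟨i, h⟩))
    have hfqj : ∀ j : Fin (m + 1), j ≠ 0 → f (q j) = v := fun j hj =>
      (if_neg (hncqj j hj)).trans (if_neg (fun h => hvq ⟨j, h⟩))
    have hrx : r x = 0 := if_pos rfl
    have hrp0 : r (p 0) = 1 :=
      (if_neg (fun h => hxp ⟨0, h⟩)).trans (if_pos (Or.inl rfl))
    have hrq0 : r (q 0) = 1 :=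
      (if_neg (fun h => hxq ⟨0, h⟩)).trans (if_pos (Or.inr rfl))
    have hrv : r v = 2 := (if_neg hvx).trans ((if_neg hncv).trans (if_pos rfl))
    have hrpi : ∀ i : Fin (n + 1), i ≠ 0 → r (p i) = 3 := fun i hi =>
      (if_neg (fun h => hxp ⟨i, h⟩)).trans
        ((if_neg (hncpi i hi)).trans (if_neg (fun h => hvp ⟨i, h⟩)))
    have hrqj : ∀ j : Fin (m + 1), j ≠ 0 → r (q j) = 3 := fun j hj =>
      (if_neg (fun h => hxq ⟨j, h⟩)).trans
        ((if_neg (hncqj j hj)).trans (if_neg (fun h => hvq ⟨j, h⟩)))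
    have hvnotK : v ∉ (wabVerts p q v x y \ ({x, y} : Set V))ᶜ := (hnotK v).2 (Or.inl rfl)
    have hp0notK : p 0 ∉ (wabVerts p q v x y \ ({x, y} : Set V))ᶜ :=
      (hnotK (p 0)).2 (Or.inr (Or.inl ⟨0, rfl⟩))
    have hq0notK : q 0 ∉ (wabVerts p q v x y \ ({x, y} : Set V))ᶜ :=
      (hnotK (q 0)).2 (Or.inr (Or.inr ⟨0, rfl⟩))
    have hfval : ∀ a, f a = x ∨ f a = p 0 ∨ f a = v := by
      intro a
      rw [hf]
      dsimp only
      split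
      · exact Or.inl rfl
      · split
        · exact Or.inr (Or.inl rfl)
        · exact Or.inr (Or.inr rfl)
    have hfa : ∀ a, a ∉ (wabVerts p q v x y \ ({x, y} : Set V))ᶜ → G.Adj a (f a) := by
      intro a ha
      rcases (hnotK a).1 ha with rfl | ⟨i, rfl⟩ | ⟨j, rfl⟩
      · rw [hfv]; exact hvadjp 0
      · by_cases hi : i = 0
        · subst hi; rw [hfp0]; exact hxp0.symm
        · rw [hfpi i hi]; exact (hvadjp i).symm
      · by_cases hj : j = 0
        · subst hj; rw [hfq0]; exact hxq0.symm
        · rw [hfqj j hj]; exact (hvadjq j).symm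
    have hfK : ∀ a, a ∉ (wabVerts p q v x y \ ({x, y} : Set V))ᶜ →
        f a ∈ (wabVerts p q v x y \ ({x, y} : Set V))ᶜ → f a = x := by
      intro a ha hin
      rcases hfval a with h | h | h
      · exact h
      · exact absurd (h ▸ hin) hp0notK
      · exact absurd (h ▸ hin) hvnotK
    have hfr : ∀ a, a ∉ (wabVerts p q v x y \ ({x, y} : Set V))ᶜ → r (f a) < r a := by
      intro a ha
      rcases (hnotK a).1 ha with rfl | ⟨i, rfl⟩ | ⟨j, rfl⟩
      · rw [hfv, hrp0, hrv]; omega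
      · by_cases hi : i = 0
        · subst hi; rw [hfp0, hrx, hrp0]; omega
        · rw [hfpi i hi, hrv, hrpi i hi]; omega
      · by_cases hj : j = 0
        · subst hj; rw [hfq0, hrx, hrq0]; omega
        · rw [hfqj j hj, hrv, hrqj j hj]; omega
    have hcx : ∃ z w : V, z ∉ (wabVerts p q v x y \ ({x, y} : Set V))ᶜ ∧
        w ∉ (wabVerts p q v x y \ ({x, y} : Set V))ᶜ ∧ z ≠ w ∧ f z = x ∧ f w = x :=
      ⟨p 0, q 0, hp0notK, hq0notK, hpq 0 0, hfp0, hfq0⟩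
    have h3 : ∀ b, b ∉ (wabVerts p q v x y \ ({x, y} : Set V))ᶜ → f b ≠ x →
        ∀ z, z ∉ (wabVerts p q v x y \ ({x, y} : Set V))ᶜ → f z = b →
        ∀ w, w ∉ (wabVerts p q v x y \ ({x, y} : Set V))ᶜ → f w = z → False := by
      intro b hb hfbx z hz hfz w hw hfw
      have hbval : b = x ∨ b = p 0 ∨ b = v := by rw [← hfz]; exact hfval z
      rcases hbval with h | h | h
      · rw [h] at hb; exact hb hxK
      · rw [h] at hfbx; exact hfbx hfp0
      · rw [h] at hfz
        have hzval : z = x ∨ z = p 0 ∨ z = v := by rw [← hfw]; exact hfval w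
        rcases hzval with h2 | h2 | h2
        · rw [h2] at hz; exact hz hxK
        · rw [h2] at hfz; exact hvx (hfp0.symm.trans hfz).symm
        · rw [h2] at hfz; exact hvp ⟨0, hfv.symm.trans hfz⟩
    obtain ⟨wy, ⟨hwyH, hwyadj⟩, -⟩ := hyout
    have hplastnm : p (Fin.last n) ∉ ({x, y} : Set V) := by
      simp only [Set.mem_insert_iff, Set.mem_singleton_iff]
      push_neg
      exact ⟨fun h => hxp ⟨_, h⟩, fun h => hyp ⟨_, h⟩⟩
    have hqlastnm : q (Fin.last m) ∉ ({x, y} : Set V) := by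
      simp only [Set.mem_insert_iff, Set.mem_singleton_iff]
      push_neg
      exact ⟨fun h => hxq ⟨_, h⟩, fun h => hyq ⟨_, h⟩⟩
    have hdeg := hdeg_helper G (wabVerts p q v x y) x y (p (Fin.last n)) (q (Fin.last m)) wy
      (hpq _ _)
      ⟨hpH _, hplastnm⟩ ⟨hqH _, hqlastnm⟩
      hwyH hyplast hyqlast hwyadj
      (hdeg3 y hyH (fun h => hvy h.symm)) hnoadj
    exact extend_good_tree G ((wabVerts p q v x y \ ({x, y} : Set V))ᶜ) x y hxK hyK hxy f r
      hfa hfK hfr hcx h3 hdeg T' hT'le hT'tree hT'good
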